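/- Let d ≥ 1 and k ≥ 1 be natural numbers, let A : Matrix (Fin d) (Fin d) ℂ, and let λ : Fin d → ℝ be the eigenvalues of the Hermitian matrix AᴴA. Then there exists B : Matrix (Fin d) (Fin d) ℂ with Matrix.rank B ≤ k and Σ_{i,j} |B i j|² = 1 such that for every finset T of Fin d with T.card ≤ k, Σ_{i ∈ T} λ i ≤ ‖Matrix.trace (Aᴴ * B)‖². -/

import Mathlib

open Matrix
open scoped Matrix

open scoped ComplexOrder in
/-- Eigenvalues of `Aᴴ * A` are nonnegative. -/
lemma aux_eigenvalues_nonneg {d : ℕ} (A : Matrix (Fin d) (Fin d) ℂ)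
    (hA : (Aᴴ * A).IsHermitian) (i : Fin d) : 0 ≤ hA.eigenvalues i :=
  (Matrix.posSemidef_conjTranspose_mul_self A).eigenvalues_nonneg i

/-- Frobenius norm squared as the real part of `trace (Mᴴ * M)`. -/
lemma sum_norm_sq_eq_re_trace {d : ℕ} (M : Matrix (Fin d) (Fin d) ℂ) :
    ∑ i : Fin d, ∑ j : Fin d, ‖M i j‖ ^ 2 = (Matrix.trace (Mᴴ * M)).re := by
  rw [Matrix.trace, Complex.re_sum, Finset.sum_comm]
  refine Finset.sum_congr rfl fun j _ => ?_
  rw [Matrix.diag_apply, Matrix.mul_apply, Complex.re_sum]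
  refine Finset.sum_congr rfl fun i _ => ?_
  rw [Matrix.conjTranspose_apply, Complex.star_def, mul_comm, Complex.mul_conj,
    Complex.ofReal_re]
  rw [Complex.sq_norm]

/-- For `d, k ≥ 1` and `A : Matrix (Fin d) (Fin d) ℂ`, with
`hA.eigenvalues` the eigenvalues of the Hermitian matrix `Aᴴ * A`, there exists a
normalized matrix `B` of rank at most `k` such that for every finset `T` with
`T.card ≤ k` one has `∑ i ∈ T, eigenvalue i ≤ ‖trace (Aᴴ * B)‖²`. -/
theorem exists_rank_le_norm_one_sum_eigenvalues_le_trace_sq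
    (d k : ℕ) (hd : 1 ≤ d) (hk : 1 ≤ k)
    (A : Matrix (Fin d) (Fin d) ℂ)
    (hA : (Aᴴ * A).IsHermitian) :
    ∃ B : Matrix (Fin d) (Fin d) ℂ, B.rank ≤ k ∧
      (∑ i : Fin d, ∑ j : Fin d, ‖B i j‖ ^ 2 = 1) ∧
      ∀ T : Finset (Fin d), T.card ≤ k →
        ∑ i ∈ T, hA.eigenvalues i ≤ ‖Matrix.trace (Aᴴ * B)‖ ^ 2 := by
  classical
  set lam := hA.eigenvalues with hlamdef
  have hlam0 : ∀ i, 0 ≤ lam i := aux_eigenvalues_nonneg A hA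
  -- choose a maximizing subset S of cardinality ≤ k
  obtain ⟨S, hSmem, hSmax⟩ :=
    Finset.exists_max_image
      ((Finset.univ : Finset (Finset (Fin d))).filter fun T => T.card ≤ k)
      (fun T => ∑ i ∈ T, lam i) ⟨∅, by simp⟩
  have hScard : S.card ≤ k := (Finset.mem_filter.mp hSmem).2
  have hmax : ∀ T : Finset (Fin d), T.card ≤ k → ∑ i ∈ T, lam i ≤ ∑ i ∈ S, lam i := by
    intro T hT
    exact hSmax T (Finset.mem_filter.mpr ⟨Finset.mem_univ _, hT⟩)
  set s : ℝ := ∑ i ∈ S, lam i with hsdef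
  have hs0 : 0 ≤ s := Finset.sum_nonneg fun i _ => hlam0 i
  rcases eq_or_lt_of_le hs0 with hs | hs
  · -- degenerate case: maximum sum is 0
    set i0 : Fin d := ⟨0, hd⟩
    set f : Fin d → ℂ := fun i => if i = i0 then (1 : ℂ) else 0 with hfdef
    refine ⟨Matrix.diagonal f, ?_, ?_, ?_⟩
    · rw [Matrix.rank_diagonal]
      have he : ∀ i, (f i ≠ 0) ↔ i = i0 := by
        intro i; by_cases hi : i = i0 <;> simp [hfdef, hi]
      calc Fintype.card {i // f i ≠ 0}
          = Fintype.card {i // i = i0} := Fintype.card_congr (Equiv.subtypeEquivRight he)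
        _ = 1 := Fintype.card_subtype_eq i0
        _ ≤ k := hk
    · have hB : ∀ i j : Fin d, ‖Matrix.diagonal f i j‖ ^ 2 =
          if i = i0 ∧ j = i0 then (1 : ℝ) else 0 := by
        intro i j
        by_cases hij : i = j
        · subst hij
          by_cases hi : i = i0 <;> simp [hfdef, hi]
        · rw [Matrix.diagonal_apply_ne _ hij,
            if_neg (by rintro ⟨rfl, rfl⟩; exact hij rfl)]
          simp
      simp only [hB, ite_and]
      simp [Finset.sum_ite_eq']
    · intro T hT
      have h1 : ∑ i ∈ T, lam i ≤ 0 := (hmax T hT).trans (le_of_eq hs.symm)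
      exact h1.trans (by positivity)
  · -- main case: s > 0
    set c : ℝ := Real.sqrt s with hcdef
    have hc : 0 < c := Real.sqrt_pos.mpr hs
    have hcne : ((c : ℝ) : ℂ) ≠ 0 := by
      simp only [ne_eq, Complex.ofReal_eq_zero]; exact hc.ne'
    have hc2 : c ^ 2 = s := Real.sq_sqrt hs0
    set U : Matrix (Fin d) (Fin d) ℂ := (hA.eigenvectorUnitary : Matrix (Fin d) (Fin d) ℂ)
      with hUdef
    have hU1 : Uᴴ * U = 1 := by
      simpa [hUdef, Matrix.star_eq_conjTranspose] using
        (Matrix.mem_unitaryGroup_iff'.mp hA.eigenvectorUnitary.2)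
    set E : Matrix (Fin d) (Fin d) ℂ :=
      Matrix.diagonal (fun i => if i ∈ S then (1 : ℂ) else 0) with hEdef
    set P : Matrix (Fin d) (Fin d) ℂ := U * E * Uᴴ with hPdef
    have hspec : Aᴴ * A = U * Matrix.diagonal ((↑) ∘ lam) * Uᴴ := by
      simpa [hUdef, Matrix.star_eq_conjTranspose] using hA.spectral_theorem
    have hEE : E * E = E := by
      rw [hEdef, Matrix.diagonal_mul_diagonal]
      refine congrArg Matrix.diagonal (funext fun i => ?_)
      by_cases hi : i ∈ S <;> simp [hi]
    have hPP : P * P = P := by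
      rw [hPdef]
      calc U * E * Uᴴ * (U * E * Uᴴ) = U * E * (Uᴴ * U) * E * Uᴴ := by
            simp only [Matrix.mul_assoc]
        _ = U * (E * E) * Uᴴ := by rw [hU1]; simp only [Matrix.mul_one, Matrix.mul_assoc]
        _ = U * E * Uᴴ := by rw [hEE, Matrix.mul_assoc]
    have hPH : Pᴴ = P := by
      rw [hPdef]
      simp only [Matrix.conjTranspose_mul, Matrix.conjTranspose_conjTranspose]
      rw [Matrix.diagonal_conjTranspose]
      have : star (fun i => if i ∈ S then (1 : ℂ) else 0) =
          (fun i => if i ∈ S then (1 : ℂ) else 0) := by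
        funext i; by_cases hi : i ∈ S <;> simp [hi, Pi.star_apply]
      rw [this, Matrix.mul_assoc]
    -- the key trace computation
    have htr : Matrix.trace (Aᴴ * A * P) = (s : ℂ) := by
      rw [hspec, hPdef]
      have : U * Matrix.diagonal ((↑) ∘ lam) * Uᴴ * (U * E * Uᴴ) =
          U * (Matrix.diagonal ((↑) ∘ lam) * E) * Uᴴ := by
        calc U * Matrix.diagonal ((↑) ∘ lam) * Uᴴ * (U * E * Uᴴ)
            = U * Matrix.diagonal ((↑) ∘ lam) * (Uᴴ * U) * E * Uᴴ := by
              simp only [Matrix.mul_assoc]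
          _ = _ := by rw [hU1]; simp only [Matrix.mul_one, Matrix.mul_assoc]
      rw [this, Matrix.trace_mul_cycle, ← Matrix.mul_assoc, hU1, Matrix.one_mul]
      rw [hEdef, Matrix.diagonal_mul_diagonal, Matrix.trace_diagonal]
      rw [show ∀ g : Fin d → ℂ, ∑ i, g i = ∑ i ∈ Finset.univ, g i from fun _ => rfl]
      have : ∀ i : Fin d, ((↑) ∘ lam) i * (if i ∈ S then (1 : ℂ) else 0) =
          if i ∈ S then (lam i : ℂ) else 0 := by
        intro i; by_cases hi : i ∈ S <;> simp [hi]
      rw [Finset.sum_congr rfl fun i _ => this i, Finset.sum_ite_mem,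
        Finset.univ_inter, hsdef]
      push_cast
      rfl
    set B : Matrix (Fin d) (Fin d) ℂ := ((c : ℂ))⁻¹ • (A * P) with hBdef
    have htrB : Matrix.trace (Aᴴ * B) = (c : ℂ) := by
      rw [hBdef, Matrix.mul_smul, Matrix.trace_smul, ← Matrix.mul_assoc, htr,
        smul_eq_mul, ← hc2]
      push_cast
      rw [pow_two, ← mul_assoc, inv_mul_cancel₀ hcne, one_mul]
    refine ⟨B, ?_, ?_, ?_⟩
    · -- rank bound
      have h1 : B = (((c : ℂ))⁻¹ • (1 : Matrix (Fin d) (Fin d) ℂ)) * (A * P) := by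
        rw [Matrix.smul_mul, Matrix.one_mul, hBdef]
      calc B.rank ≤ (A * P).rank := by rw [h1]; exact Matrix.rank_mul_le_right _ _
        _ ≤ P.rank := Matrix.rank_mul_le_right A P
        _ ≤ (E * Uᴴ).rank := by rw [hPdef, Matrix.mul_assoc]; exact Matrix.rank_mul_le_right U _
        _ ≤ E.rank := Matrix.rank_mul_le_left E Uᴴ
        _ ≤ k := by
            rw [hEdef, Matrix.rank_diagonal]
            have he : ∀ i, ((if i ∈ S then (1 : ℂ) else 0) ≠ 0) ↔ i ∈ S := by
              intro i; by_cases hi : i ∈ S <;> simp [hi]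
            calc Fintype.card {i // (if i ∈ S then (1 : ℂ) else 0) ≠ 0}
                = Fintype.card {i // i ∈ S} :=
                  Fintype.card_congr (Equiv.subtypeEquivRight he)
              _ = S.card := Fintype.card_coe S
              _ ≤ k := hScard
    · -- normalization
      have hBH : Bᴴ = ((c : ℂ))⁻¹ • (Pᴴ * Aᴴ) := by
        rw [hBdef, Matrix.conjTranspose_smul, Matrix.conjTranspose_mul]
        congr 1
        rw [← Complex.ofReal_inv, Complex.star_def, Complex.conj_ofReal]
      have htrBB : Matrix.trace (Bᴴ * B) = 1 := by
        rw [hBH, hBdef, Matrix.smul_mul, Matrix.mul_smul, Matrix.trace_smul,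
          Matrix.trace_smul, hPH]
        have h2 : P * Aᴴ * (A * P) = P * (Aᴴ * A * P) := by simp only [Matrix.mul_assoc]
        rw [h2, Matrix.trace_mul_comm, Matrix.mul_assoc (Aᴴ * A) P P, hPP, htr]
        rw [smul_eq_mul, smul_eq_mul, ← hc2]
        push_cast
        rw [pow_two]
        field_simp
      rw [sum_norm_sq_eq_re_trace, htrBB, Complex.one_re]
    · -- the inequality
      intro T hT
      rw [htrB, Complex.norm_real, Real.norm_of_nonneg hc.le, hc2]
      exact hmax T hT
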